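/- Let S be a numerical semigroup with m(S) < F(S). Then S is a MED-semigroup with maximal reduced type if and only if S = ⟨m⟩ ∪ {x ∈ ℕ : x ≥ F+1} where m = m(S), F = F(S), 2 ≤ m < F, and m does not divide F. -/

import Mathlib

/-- A numerical semigroup: a subset of ℕ containing 0, closed under addition,
with finite complement. -/
noncomputable def IsNumericalSemigroup (S : Set ℕ) : Prop :=
  0 ∈ S ∧ (∀ a ∈ S, ∀ b ∈ S, a + b ∈ S) ∧ Sᶜ.Finite

/-- The half-line Δ(m) = {0} ∪ {x : m ≤ x}. -/
noncomputable def Delta (m : ℕ) : Set ℕ := {0} ∪ {x | m ≤ x}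

/-- Multiplicity: least nonzero element. -/
noncomputable def mult (S : Set ℕ) : ℕ := sInf {s ∈ S | s ≠ 0}

/-- Frobenius number: largest gap. -/
noncomputable def frob (S : Set ℕ) : ℕ := sSup Sᶜ

/-- Genus: number of gaps. -/
noncomputable def genus (S : Set ℕ) : ℕ := Sᶜ.ncard

/-- The image of S in ℤ. -/
noncomputable def ZS (S : Set ℕ) : Set ℤ := (fun n : ℕ => (n : ℤ)) '' S

/-- Pseudo-Frobenius numbers (as integers). -/
noncomputable def PF (S : Set ℕ) : Set ℤ :=
  {x | x ∉ ZS S ∧ ∀ s ∈ S, s ≠ 0 → x + (s : ℤ) ∈ ZS S}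

/-- Reduced pseudo-Frobenius set. -/
noncomputable def rPF (S : Set ℕ) : Set ℤ :=
  {x | x ∉ ZS S ∧ (frob S : ℤ) - (mult S : ℤ) + 1 ≤ x ∧ x ≤ (frob S : ℤ)}

/-- Type t(S). -/
noncomputable def typ (S : Set ℕ) : ℕ := (PF S).ncard

/-- Reduced type s(S). -/
noncomputable def redtyp (S : Set ℕ) : ℕ := (rPF S).ncard

/-- Apéry set of n in S. -/
noncomputable def Ap (S : Set ℕ) (n : ℕ) : Set ℕ := {s ∈ S | ∀ u : ℕ, s = u + n → u ∉ S}

/-- Minimal system of generators. -/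
noncomputable def msg (S : Set ℕ) : Set ℕ :=
  (S \ {0}) \ {x | ∃ a ∈ S \ {0}, ∃ b ∈ S \ {0}, x = a + b}

/-- Embedding dimension. -/
noncomputable def embdim (S : Set ℕ) : ℕ := (msg S).ncard

/-- Second smallest minimal generator. -/
noncomputable def secondGen (S : Set ℕ) : ℕ := sInf (msg S \ {mult S})

section Aux
variable {S : Set ℕ}

lemma compl_bdd (hNS : IsNumericalSemigroup S) : BddAbove Sᶜ := hNS.2.2.bddAbove

lemma mem_of_frob_lt (hNS : IsNumericalSemigroup S) {n : ℕ} (h : frob S < n) : n ∈ S := by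
  by_contra hn
  exact absurd (le_csSup (compl_bdd hNS) hn) (not_le.mpr h)

lemma frob_notMem (hNS : IsNumericalSemigroup S) (hF : 0 < frob S) : frob S ∉ S := by
  have hne : Sᶜ.Nonempty := by
    rcases Set.eq_empty_or_nonempty Sᶜ with h | h
    · exfalso
      rw [frob, h, csSup_empty] at hF
      simp at hF
    · exact h
  exact Nat.sSup_mem hne (compl_bdd hNS)

lemma mult_spec (hNS : IsNumericalSemigroup S) : mult S ∈ S ∧ mult S ≠ 0 := by
  have hne : {s ∈ S | s ≠ 0}.Nonempty :=
    ⟨frob S + 1, mem_of_frob_lt hNS (lt_add_one _), by omega⟩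
  exact Nat.sInf_mem hne

lemma mult_le' {s : ℕ} (hs : s ∈ S) (h0 : s ≠ 0) : mult S ≤ s := Nat.sInf_le ⟨hs, h0⟩

lemma two_le_mult (hNS : IsNumericalSemigroup S) (hmF : mult S < frob S) : 2 ≤ mult S := by
  have h0 := (mult_spec hNS).2
  by_contra h
  have h1 : mult S = 1 := by omega
  have hall : ∀ n : ℕ, n ∈ S := by
    intro n
    induction n with
    | zero => exact hNS.1
    | succ k ih => exact hNS.2.1 k ih 1 (h1 ▸ (mult_spec hNS).1)
  exact frob_notMem hNS (by omega) (hall _)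

lemma mem_ZS_iff {n : ℕ} : (n : ℤ) ∈ ZS S ↔ n ∈ S := by
  constructor
  · rintro ⟨k, hk, hkn⟩
    have hkn' : (k : ℤ) = (n : ℤ) := hkn
    have : k = n := by exact_mod_cast hkn'
    rwa [← this]
  · intro h
    exact ⟨n, h, rfl⟩

lemma mem_ZS_elim {x : ℤ} (hx : x ∈ ZS S) : 0 ≤ x ∧ x.toNat ∈ S := by
  rcases hx with ⟨k, hk, hkn⟩
  have hkn' : (k : ℤ) = x := hkn
  constructor
  · omega
  · have : x.toNat = k := by omega
    rwa [this]

lemma rPF_subset_PF (hNS : IsNumericalSemigroup S) : rPF S ⊆ PF S := by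
  rintro x ⟨hx, h1, h2⟩
  refine ⟨hx, fun s hs hs0 => ?_⟩
  have hm : mult S ≤ s := mult_le' hs hs0
  have hm' : (mult S : ℤ) ≤ (s : ℤ) := by exact_mod_cast hm
  have hxs : (frob S : ℤ) + 1 ≤ x + s := by omega
  have he : x + (s : ℤ) = (((x + s).toNat : ℕ) : ℤ) := by omega
  rw [he]
  exact mem_ZS_iff.mpr (mem_of_frob_lt hNS (by omega))

lemma PF_finite (hNS : IsNumericalSemigroup S) : (PF S).Finite := by
  have hsub : PF S ⊆ Set.Icc (-(mult S : ℤ)) (frob S : ℤ) := by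
    rintro x ⟨hx, hpf⟩
    constructor
    · have h := mem_ZS_elim (hpf (mult S) (mult_spec hNS).1 (mult_spec hNS).2)
      omega
    · by_contra h
      push_neg at h
      have he : x = ((x.toNat : ℕ) : ℤ) := by omega
      exact hx (he ▸ mem_ZS_iff.mpr (mem_of_frob_lt hNS (by omega)))
  exact (Set.finite_Icc _ _).subset hsub

end Aux

section Apery
variable {S : Set ℕ}

lemma add_mul_mult_mem (hNS : IsNumericalSemigroup S) {x : ℕ} (hx : x ∈ S) (k : ℕ) :
    x + k * mult S ∈ S := by
  induction k with
  | zero => simpa using hx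
  | succ j ih =>
    have := hNS.2.1 _ ih (mult S) (mult_spec hNS).1
    have he : x + (j + 1) * mult S = x + j * mult S + mult S := by ring
    rwa [he]

lemma mul_mult_mem (hNS : IsNumericalSemigroup S) (k : ℕ) : k * mult S ∈ S := by
  have := add_mul_mult_mem hNS hNS.1 k
  simpa using this

lemma zero_mem_Ap (hNS : IsNumericalSemigroup S) : 0 ∈ Ap S (mult S) := by
  refine ⟨hNS.1, fun u hu => ?_⟩
  exfalso
  have := (mult_spec hNS).2
  omega

lemma mult_notMem_Ap (hNS : IsNumericalSemigroup S) : mult S ∉ Ap S (mult S) := by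
  rintro ⟨_, h⟩
  exact h 0 (by omega) hNS.1

lemma Ap_mod_inj (hNS : IsNumericalSemigroup S) {x y : ℕ} (hx : x ∈ Ap S (mult S))
    (hy : y ∈ Ap S (mult S)) (hxy : x % mult S = y % mult S) (h : x < y) : False := by
  have hd : mult S ∣ y - x := (Nat.modEq_iff_dvd' (le_of_lt h)).mp hxy
  rcases hd with ⟨k, hk⟩
  have hkpos : k ≠ 0 := by rintro rfl; omega
  obtain ⟨j, rfl⟩ := Nat.exists_eq_succ_of_ne_zero hkpos
  simp only [Nat.succ_eq_add_one] at hk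
  have hmem : x + j * mult S ∈ S := add_mul_mult_mem hNS hx.1 j
  refine hy.2 (x + j * mult S) ?_ hmem
  have he : mult S * (j + 1) = j * mult S + mult S := by ring
  omega

lemma Ap_bijOn (hNS : IsNumericalSemigroup S) :
    Set.BijOn (· % mult S) (Ap S (mult S)) (Set.Iio (mult S)) := by
  have hm0 : mult S ≠ 0 := (mult_spec hNS).2
  refine ⟨fun x _ => Nat.mod_lt _ (by omega), ?_, ?_⟩
  · intro x hx y hy hxy
    rcases Nat.lt_trichotomy x y with h | h | h
    · exact absurd (Ap_mod_inj hNS hx hy hxy h) not_false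
    · exact h
    · exact absurd (Ap_mod_inj hNS hy hx hxy.symm h) not_false
  · intro r hr
    have hr' : r < mult S := hr
    set B := {x : ℕ | x ∈ S ∧ x % mult S = r} with hB
    have hBne : B.Nonempty := by
      refine ⟨r + (frob S + 1) * mult S, ?_, ?_⟩
      · apply mem_of_frob_lt hNS
        have : frob S + 1 ≤ (frob S + 1) * mult S := Nat.le_mul_of_pos_right _ (by omega)
        omega
      · rw [Nat.add_mul_mod_self_right]
        exact Nat.mod_eq_of_lt hr'
    have hmin := Nat.sInf_mem hBne
    refine ⟨sInf B, ⟨hmin.1, fun u hu huS => ?_⟩, hmin.2⟩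
    have huB : u ∈ B := by
      refine ⟨huS, ?_⟩
      have : sInf B % mult S = u % mult S := by
        rw [hu, Nat.add_mod_right]
      rw [← this, hmin.2]
    have := Nat.sInf_le huB
    omega

lemma Ap_finite (hNS : IsNumericalSemigroup S) : (Ap S (mult S)).Finite := by
  have hb := Ap_bijOn hNS
  have himg : ((· % mult S) '' Ap S (mult S)).Finite := hb.image_eq ▸ Set.finite_Iio _
  exact Set.Finite.of_finite_image himg hb.injOn

lemma Ap_ncard (hNS : IsNumericalSemigroup S) : (Ap S (mult S)).ncard = mult S := by
  have hb := Ap_bijOn hNS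
  have h1 : ((· % mult S) '' Ap S (mult S)).ncard = (Ap S (mult S)).ncard :=
    Set.ncard_image_of_injOn hb.injOn
  rw [hb.image_eq] at h1
  rw [← h1]
  have : Set.Iio (mult S) = ↑(Finset.range (mult S)) := by
    ext x; simp
  rw [this, Set.ncard_coe_finset, Finset.card_range]

end Apery

section MED
variable {S : Set ℕ}

lemma msg_subset_Ap (hNS : IsNumericalSemigroup S) :
    msg S ⊆ insert (mult S) (Ap S (mult S) \ {0}) := by
  rintro g ⟨⟨hgS, hg0⟩, hgsum⟩
  simp only [Set.mem_singleton_iff] at hg0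
  by_cases hAp : g ∈ Ap S (mult S)
  · exact Set.mem_insert_of_mem _ ⟨hAp, hg0⟩
  · left
    simp only [Ap, Set.mem_setOf_eq, not_and, not_forall] at hAp
    obtain ⟨u, hu, huS⟩ := hAp hgS
    simp only [not_not] at huS
    rcases Nat.eq_zero_or_pos u with h0 | h0
    · omega
    · exfalso
      exact hgsum ⟨u, ⟨huS, by simpa using Nat.pos_iff_ne_zero.mp h0⟩,
        mult S, ⟨(mult_spec hNS).1, by simpa using (mult_spec hNS).2⟩, hu⟩

lemma insert_Ap_ncard (hNS : IsNumericalSemigroup S) (h2 : 2 ≤ mult S) :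
    (insert (mult S) (Ap S (mult S) \ {0})).ncard = mult S := by
  have hfin : (Ap S (mult S) \ {0}).Finite := (Ap_finite hNS).subset Set.diff_subset
  rw [Set.ncard_insert_of_notMem (fun h => mult_notMem_Ap hNS h.1) hfin,
    Set.ncard_diff_singleton_of_mem (zero_mem_Ap hNS), Ap_ncard hNS]
  omega

lemma msg_eq_of_embdim (hNS : IsNumericalSemigroup S) (h2 : 2 ≤ mult S)
    (hED : embdim S = mult S) : msg S = insert (mult S) (Ap S (mult S) \ {0}) := by
  exact Set.eq_of_subset_of_ncard_le (msg_subset_Ap hNS)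
    (by rw [insert_Ap_ncard hNS h2]; rw [← hED]; rfl)
    (Set.Finite.insert _ ((Ap_finite hNS).subset Set.diff_subset))

lemma med_closure (hNS : IsNumericalSemigroup S) (h2 : 2 ≤ mult S)
    (hED : embdim S = mult S) {x y : ℕ} (hx : x ∈ S) (hx0 : x ≠ 0)
    (hy : y ∈ S) (hy0 : y ≠ 0) : x + y - mult S ∈ S := by
  have hmsg := msg_eq_of_embdim hNS h2 hED
  have hz : x + y ∈ S := hNS.2.1 x hx y hy
  have hznotmsg : x + y ∉ msg S := by
    rintro ⟨_, hne⟩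
    exact hne ⟨x, ⟨hx, by simpa using hx0⟩, y, ⟨hy, by simpa using hy0⟩, rfl⟩
  have hzAp : x + y ∉ Ap S (mult S) := by
    intro hAp
    apply hznotmsg
    rw [hmsg]
    exact Set.mem_insert_of_mem _ ⟨hAp, by simp; omega⟩
  simp only [Ap, Set.mem_setOf_eq, not_and, not_forall] at hzAp
  obtain ⟨u, hu, huS⟩ := hzAp hz
  simp only [not_not] at huS
  have : x + y - mult S = u := by omega
  rwa [this]

end MED

section Fwd
variable {S : Set ℕ}

lemma dvd_mult_mem (hNS : IsNumericalSemigroup S) {x : ℕ} (h : mult S ∣ x) : x ∈ S := by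
  rcases h with ⟨k, rfl⟩
  have := mul_mult_mem hNS k
  rwa [mul_comm]

lemma forward_dir (hNS : IsNumericalSemigroup S) (hmF : mult S < frob S)
    (hED : embdim S = mult S) (hRT : redtyp S = typ S) :
    2 ≤ mult S ∧ ¬ mult S ∣ frob S ∧
      S = {x : ℕ | mult S ∣ x} ∪ {x : ℕ | frob S + 1 ≤ x} := by
  have h2 := two_le_mult hNS hmF
  have hPFeq : rPF S = PF S :=
    Set.eq_of_subset_of_ncard_le (rPF_subset_PF hNS) (le_of_eq hRT.symm) (PF_finite hNS)
  -- no element of S in (0, F] is a non-multiple of mult S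
  have hA : ∀ x ∈ S, x ≤ frob S → mult S ∣ x := by
    by_contra hcon
    push_neg at hcon
    set A := {x : ℕ | x ∈ S ∧ x ≤ frob S ∧ ¬ mult S ∣ x} with hAdef
    have hAne : A.Nonempty := by
      obtain ⟨x, hx1, hx2, hx3⟩ := hcon
      exact ⟨x, hx1, hx2, hx3⟩
    have ha := Nat.sInf_mem hAne
    set a := sInf A with haun
    obtain ⟨haS, haF, hadvd⟩ := ha
    have ha0 : a ≠ 0 := fun h => hadvd (h ▸ dvd_zero _)
    have ham : mult S < a := by
      have h1 : mult S ≤ a := mult_le' haS ha0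
      have h2 : a ≠ mult S := fun h => hadvd (h ▸ dvd_refl _)
      omega
    have hamS : a - mult S ∉ S := by
      intro hmem
      have hdvd' : ¬ mult S ∣ a - mult S := by
        intro hd
        apply hadvd
        have : a = (a - mult S) + mult S := by omega
        rw [this]
        exact Nat.dvd_add hd (dvd_refl _)
      have : a - mult S ∈ A := ⟨hmem, by omega, hdvd'⟩
      have := Nat.sInf_le this
      omega
    have hPF : ((a - mult S : ℕ) : ℤ) ∈ PF S := by
      refine ⟨fun h => hamS (mem_ZS_iff.mp h), fun s hs hs0 => ?_⟩
      have hmed : a + s - mult S ∈ S := med_closure hNS h2 hED haS ha0 hs hs0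
      have he : ((a - mult S : ℕ) : ℤ) + (s : ℤ) = ((a + s - mult S : ℕ) : ℤ) := by
        push_cast [Nat.sub_add_comm (le_of_lt ham)]
        omega
      rw [he]
      exact mem_ZS_iff.mpr hmed
    rw [← hPFeq] at hPF
    obtain ⟨_, hge, _⟩ := hPF
    have : (a : ℤ) - (mult S : ℤ) = ((a - mult S : ℕ) : ℤ) := by push_cast; omega
    omega
  have hF0 : 0 < frob S := by omega
  have hSeq : S = {x : ℕ | mult S ∣ x} ∪ {x : ℕ | frob S + 1 ≤ x} := by
    ext x
    constructor
    · intro hx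
      by_cases hle : x ≤ frob S
      · exact Or.inl (hA x hx hle)
      · exact Or.inr (by simp only [Set.mem_setOf_eq]; omega)
    · rintro (h | h)
      · exact dvd_mult_mem hNS h
      · exact mem_of_frob_lt hNS (by simpa using h)
  refine ⟨h2, fun hdvd => ?_, hSeq⟩
  exact frob_notMem hNS hF0 (dvd_mult_mem hNS hdvd)

end Fwd

section Rev
variable {S : Set ℕ}

lemma rev_embdim (hNS : IsNumericalSemigroup S) (hmF : mult S < frob S)
    (h2 : 2 ≤ mult S)
    (hS : S = {x : ℕ | mult S ∣ x} ∪ {x : ℕ | frob S + 1 ≤ x}) :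
    embdim S = mult S := by
  set m := mult S with hm
  set F := frob S with hF
  have hmem : ∀ x : ℕ, x ∈ S ↔ (m ∣ x ∨ F + 1 ≤ x) := by
    intro x
    rw [hS]
    exact Iff.rfl
  classical
  set G : Finset ℕ := insert m ((Finset.Ioc F (F + m)).filter (fun x => ¬ m ∣ x)) with hG
  have hmsg : msg S = ↑G := by
    ext g
    rw [hG]
    simp only [Finset.coe_insert, Set.mem_insert_iff, Finset.mem_coe, Finset.mem_filter,
      Finset.mem_Ioc]
    constructor
    · rintro ⟨⟨hgS, hg0⟩, hgsum⟩
      simp only [Set.mem_singleton_iff] at hg0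
      by_cases hd : m ∣ g
      · left
        rcases hd with ⟨k, rfl⟩
        match k with
        | 0 => omega
        | 1 => simp
        | (j+2) =>
          exfalso
          apply hgsum
          refine ⟨m, ⟨(hmem m).mpr (Or.inl dvd_rfl), by simp; omega⟩,
            m * (j + 1), ⟨(hmem _).mpr (Or.inl ⟨j + 1, rfl⟩), by simp; positivity⟩, by ring⟩
      · right
        have hge : F + 1 ≤ g := ((hmem g).mp hgS).resolve_left hd
        refine ⟨⟨by omega, ?_⟩, hd⟩
        by_contra hgt
        push_neg at hgt
        apply hgsum
        refine ⟨m, ⟨(hmem m).mpr (Or.inl dvd_rfl), by simp; omega⟩,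
          g - m, ⟨(hmem _).mpr (Or.inr (by omega)), by simp; omega⟩, by omega⟩
    · have hmlow : ∀ a ∈ S, a ≠ 0 → m ≤ a := fun a ha h0 => mult_le' ha h0
      rintro (rfl | ⟨⟨h1, h1'⟩, hd⟩)
      · refine ⟨⟨(hmem m).mpr (Or.inl dvd_rfl), by simp; omega⟩, ?_⟩
        rintro ⟨a, ⟨ha, ha0⟩, b, ⟨hb, hb0⟩, habe⟩
        simp only [Set.mem_singleton_iff] at ha0 hb0
        have := hmlow a ha ha0
        have := hmlow b hb hb0
        omega
      · refine ⟨⟨(hmem g).mpr (Or.inr (by omega)), by simp; omega⟩, ?_⟩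
        rintro ⟨a, ⟨ha, ha0⟩, b, ⟨hb, hb0⟩, rfl⟩
        simp only [Set.mem_singleton_iff] at ha0 hb0
        have hma := hmlow a ha ha0
        have hmb := hmlow b hb hb0
        have hda : m ∣ a := by
          rcases (hmem a).mp ha with h | h
          · exact h
          · exfalso; omega
        have hdb : m ∣ b := by
          rcases (hmem b).mp hb with h | h
          · exact h
          · exfalso; omega
        exact hd (Nat.dvd_add hda hdb)
  have hm0 : 0 < m := by omega
  have hfd : (Finset.Ioc F (F + m)).filter (fun x => m ∣ x) = {m * (F / m + 1)} := by
    ext x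
    simp only [Finset.mem_filter, Finset.mem_Ioc, Finset.mem_singleton]
    have hq1 : m * (F / m) ≤ F := Nat.mul_div_le F m
    have hq2 : F < m * (F / m) + m := by
      have h3 := Nat.mod_add_div F m
      have h4 := Nat.mod_lt F hm0
      omega
    constructor
    · rintro ⟨⟨h1, h1'⟩, k, rfl⟩
      have hk1 : F / m < k := by
        by_contra hle
        push_neg at hle
        have : m * k ≤ m * (F / m) := Nat.mul_le_mul_left m hle
        omega
      have hk2 : k ≤ F / m + 1 := by
        by_contra hgt
        push_neg at hgt
        have : m * (F / m + 2) ≤ m * k := Nat.mul_le_mul_left m (by omega)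
        have hexp : m * (F / m + 2) = m * (F / m) + m + m := by ring
        omega
      have : k = F / m + 1 := by omega
      rw [this]
    · rintro rfl
      have hexp : m * (F / m + 1) = m * (F / m) + m := by ring
      exact ⟨⟨by omega, by omega⟩, ⟨F / m + 1, rfl⟩⟩
  have hsplit := Finset.card_filter_add_card_filter_not
    (s := Finset.Ioc F (F + m)) (p := fun x => m ∣ x)
  rw [Nat.card_Ioc, hfd, Finset.card_singleton] at hsplit
  have hcard : G.card = m := by
    rw [hG, Finset.card_insert_of_notMem (by simp)]
    omega
  rw [embdim, hmsg, Set.ncard_coe_finset, hcard]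

end Rev

section Rev2
variable {S : Set ℕ}

lemma rev_PF (hNS : IsNumericalSemigroup S) (hmF : mult S < frob S)
    (h2 : 2 ≤ mult S)
    (hS : S = {x : ℕ | mult S ∣ x} ∪ {x : ℕ | frob S + 1 ≤ x}) :
    PF S = rPF S := by
  set m := mult S with hm
  set F := frob S with hF
  have hmem : ∀ x : ℕ, x ∈ S ↔ (m ∣ x ∨ F + 1 ≤ x) := by
    intro x
    rw [hS]
    exact Iff.rfl
  refine Set.Subset.antisymm ?_ (rPF_subset_PF hNS)
  rintro x ⟨hx, hpf⟩
  have hxF : x ≤ (F : ℤ) := by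
    by_contra h
    push_neg at h
    have he : x = ((x.toNat : ℕ) : ℤ) := by omega
    exact hx (he ▸ mem_ZS_iff.mpr (mem_of_frob_lt hNS (by omega)))
  have hm_mem : m ∈ S := (hmem m).mpr (Or.inl dvd_rfl)
  obtain ⟨n, hnS, hne⟩ := hpf m hm_mem (by omega)
  have hne' : (n : ℤ) = x + m := hne
  rcases (hmem n).mp hnS with hdn | hgen
  · exfalso
    have hdx : (m : ℤ) ∣ x := by
      rcases hdn with ⟨k, hk⟩
      refine ⟨(k : ℤ) - 1, ?_⟩
      have : (n : ℤ) = (m : ℤ) * (k : ℤ) := by exact_mod_cast hk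
      rw [mul_sub]
      omega
    set s : ℕ := if m ∣ (F + 1) then F + 2 else F + 1 with hsdef
    have hsle : F + 1 ≤ s ∧ s ≤ F + 2 := by
      rw [hsdef]; split_ifs <;> omega
    have hsS : s ∈ S := (hmem s).mpr (Or.inr hsle.1)
    have hsnd : ¬ m ∣ s := by
      rw [hsdef]; split_ifs with h
      · intro h2'
        have hds := Nat.dvd_sub h2' h
        have : F + 2 - (F + 1) = 1 := by omega
        rw [this] at hds
        have := Nat.le_of_dvd one_pos hds
        omega
      · exact h
    obtain ⟨n', hn'S, hn'e⟩ := hpf s hsS (by omega)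
    have hn'e' : (n' : ℤ) = x + s := hn'e
    rcases (hmem n').mp hn'S with hdn' | hgen'
    · apply hsnd
      have hds : (m : ℤ) ∣ (s : ℤ) := by
        have h1 : (m : ℤ) ∣ (n' : ℤ) := by exact_mod_cast hdn'
        have he : (s : ℤ) = (n' : ℤ) - x := by omega
        rw [he]
        exact dvd_sub h1 hdx
      exact_mod_cast hds
    · -- n' ≥ F+1, so x ≥ -1
      have hx1 : -1 ≤ x := by
        have : (F : ℤ) + 1 ≤ (n' : ℤ) := by exact_mod_cast hgen'
        omega
      have hx0 : x ≠ 0 := by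
        intro h0
        exact hx (h0 ▸ mem_ZS_iff.mpr (show (0:ℕ) ∈ S from hNS.1))
      rcases lt_or_ge x 0 with hneg | hpos
      · -- x = -1, m ∣ -1
        have : x = -1 := by omega
        rw [this] at hdx
        have hd1 : (m : ℤ) ∣ 1 := by
          have := (dvd_neg (α := ℤ)).mpr hdx
          simpa using this
        have := Int.le_of_dvd one_pos hd1
        omega
      · have he : x = ((x.toNat : ℕ) : ℤ) := by omega
        apply hx
        rw [he]
        apply mem_ZS_iff.mpr
        apply (hmem _).mpr
        left
        have : (m : ℤ) ∣ ((x.toNat : ℕ) : ℤ) := he ▸ hdx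
        exact_mod_cast this
  · -- n ≥ F + 1
    refine ⟨hx, ?_, hxF⟩
    have : (F : ℤ) + 1 ≤ (n : ℤ) := by exact_mod_cast hgen
    omega

end Rev2

theorem stmt18 (S : Set ℕ) (hNS : IsNumericalSemigroup S) (hmF : mult S < frob S) :
    (embdim S = mult S ∧ redtyp S = typ S) ↔
      (2 ≤ mult S ∧ ¬ mult S ∣ frob S ∧
        S = {x : ℕ | mult S ∣ x} ∪ {x : ℕ | frob S + 1 ≤ x}) := by
  constructor
  · rintro ⟨hED, hRT⟩
    exact forward_dir hNS hmF hED hRT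
  · rintro ⟨h2, hdvd, hS⟩
    refine ⟨rev_embdim hNS hmF h2 hS, ?_⟩
    rw [redtyp, typ, rev_PF hNS hmF h2 hS]
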